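/- Let (G,B,m,w) be a connected weighted finite graph with boundary, |B| ≥ 2, such that σ₂ = w₀·V_B / ((V_B − m₀)² · d_B). Then |B| = 2 and m_x = m₀ for every x ∈ B (in particular both boundary vertices have the same vertex measure, equal to m₀). -/

import Mathlib

open Finset

variable {V : Type*}

/-- The Dirichlet energy `⟨du,du⟩ = ∑_{{x,y}∈E} (u y - u x)^2 w_{xy}` of a function `u`,
where the edge weight `w` is symmetric and vanishes on non-adjacent pairs. -/
noncomputable def energy [Fintype V] (w : V → V → ℝ) (u : V → ℝ) : ℝ :=
  (1 / 2) * ∑ x, ∑ y, (u y - u x) ^ 2 * w x y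

/-- The Dirichlet pairing `⟨du,dv⟩ = ∑_{{x,y}∈E} (u y - u x)(v y - v x) w_{xy}`. -/
noncomputable def dirPairing [Fintype V] (w : V → V → ℝ) (u v : V → ℝ) : ℝ :=
  (1 / 2) * ∑ x, ∑ y, (u y - u x) * (v y - v x) * w x y

/-- The weighted graph Laplacian `Δu(x) = (1/m_x) ∑_y (u y - u x) w_{xy}`. -/
noncomputable def glap [Fintype V] (m : V → ℝ) (w : V → V → ℝ) (u : V → ℝ) (x : V) : ℝ :=
  (1 / m x) * ∑ y, (u y - u x) * w x y

/-- `d_B`, the maximal graph distance between two boundary vertices. -/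
noncomputable def boundaryDiam (G : SimpleGraph V) (B : Finset V) : ℕ :=
  (B ×ˢ B).sup fun p => G.dist p.1 p.2

/-- `w₀`, the minimal edge weight. -/
noncomputable def minEdgeWeight (G : SimpleGraph V) (w : V → V → ℝ) : ℝ :=
  sInf {r : ℝ | ∃ x y, G.Adj x y ∧ w x y = r}

/-- `m₀`, the minimal vertex measure on the boundary. -/
noncomputable def minBoundaryMeasure (B : Finset V) (m : V → ℝ) : ℝ :=
  sInf {r : ℝ | ∃ x ∈ B, m x = r}

/-- The second Steklov eigenvalue `σ₂`, via its variational characterization: the infimum of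
the Rayleigh quotients `E(u)/⟨u,u⟩_B` over functions `u` on `V` whose boundary values are
nonzero and have weighted mean zero.  (Since the harmonic extension minimizes the Dirichlet
energy among all extensions of given boundary data, this agrees with the second eigenvalue of
the Steklov operator.) -/
noncomputable def sigma2 [Fintype V] (B : Finset V) (m : V → ℝ) (w : V → V → ℝ) : ℝ :=
  sInf {r : ℝ | ∃ u : V → ℝ, (∃ x ∈ B, u x ≠ 0) ∧ (∑ x ∈ B, u x * m x = 0) ∧
    r = energy w u / ∑ x ∈ B, (u x) ^ 2 * m x}

lemma walk_telescope {G : SimpleGraph V} {a b : V} (u : V → ℝ) (p : G.Walk a b) :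
    (p.darts.map fun d => u d.snd - u d.fst).sum = u b - u a := by
  induction p with
  | nil => simp
  | cons h q ih => simp only [SimpleGraph.Walk.darts_cons, List.map_cons, List.sum_cons, ih]; ring

lemma energy_ge_sum_darts [Fintype V] [DecidableEq V] {G : SimpleGraph V} (w : V → V → ℝ)
    (hw_symm : ∀ x y, w x y = w y x) (hnn : ∀ x y, 0 ≤ w x y)
    {a b : V} (p : G.Walk a b) (hp : p.IsPath) (u : V → ℝ) :
    ∑ d ∈ p.darts.toFinset, (u d.snd - u d.fst) ^ 2 * w d.fst d.snd ≤ energy w u := by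
  classical
  set f : V × V → ℝ := fun q => (u q.2 - u q.1) ^ 2 * w q.1 q.2 with hf
  have hfnn : ∀ q : V × V, 0 ≤ f q := fun q => mul_nonneg (sq_nonneg _) (hnn _ _)
  have he : energy w u = (1/2) * ∑ q ∈ Finset.univ ×ˢ Finset.univ, f q := by
    rw [energy, Finset.sum_product]
  have hinj : ∀ d₁ ∈ p.darts, ∀ d₂ ∈ p.darts, d₁.edge = d₂.edge → d₁ = d₂ :=
    List.inj_on_of_nodup_map hp.isTrail.edges_nodup
  set D := p.darts.toFinset with hD
  set F := D.image SimpleGraph.Dart.toProd with hF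
  set R := D.image (fun d => d.toProd.swap) with hR
  have hFR : Disjoint F R := by
    rw [Finset.disjoint_left]
    rintro q hqF hqR
    simp only [hF, hR, Finset.mem_image, hD, List.mem_toFinset] at hqF hqR
    obtain ⟨d₁, hd₁, rfl⟩ := hqF
    obtain ⟨d₂, hd₂, hswap⟩ := hqR
    have hedge : d₂.edge = d₁.edge := by
      rw [SimpleGraph.Dart.edge, SimpleGraph.Dart.edge, ← hswap, Sym2.mk_prod_swap_eq]; rfl
    have := hinj d₂ hd₂ d₁ hd₁ hedge
    subst this
    have h1 : d₂.toProd.1 = d₂.toProd.2 := by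
      have := congrArg Prod.fst hswap
      simpa using this
    exact (G.irrefl (h1 ▸ d₂.adj))
  have hsubF : ∀ d₁ ∈ D, ∀ d₂ ∈ D, d₁.toProd = d₂.toProd → d₁ = d₂ := by
    intro d₁ _ d₂ _ h; exact SimpleGraph.Dart.toProd_injective h
  have hsumF : ∑ q ∈ F, f q = ∑ d ∈ D, f d.toProd := Finset.sum_image hsubF
  have hsumR : ∑ q ∈ R, f q = ∑ d ∈ D, f d.toProd := by
    rw [Finset.sum_image]
    · refine Finset.sum_congr rfl fun d _ => ?_
      simp only [hf, Prod.fst_swap, Prod.snd_swap]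
      rw [hw_symm]; ring
    · intro d₁ _ d₂ _ h
      exact SimpleGraph.Dart.toProd_injective (Prod.swap_injective h)
  have hsub : F ∪ R ⊆ Finset.univ ×ˢ Finset.univ := by
    rw [Finset.univ_product_univ]; exact Finset.subset_univ _
  have hle : ∑ q ∈ F ∪ R, f q ≤ ∑ q ∈ Finset.univ ×ˢ Finset.univ, f q :=
    Finset.sum_le_sum_of_subset_of_nonneg hsub (fun q _ _ => hfnn q)
  rw [Finset.sum_union hFR, hsumF, hsumR] at hle
  have hrfl : ∑ d ∈ D, f d.toProd = ∑ d ∈ D, (u d.snd - u d.fst) ^ 2 * w d.fst d.snd := rfl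
  rw [he, ← hrfl]
  linarith [hle]


/-- **Rigidity, part (1)** (Theorem 1.4 (1)).
If a connected weighted finite graph with boundary `B`, `|B| ≥ 2`, satisfies
`σ₂ = w₀ V_B / ((V_B - m₀)² d_B)`, then `|B| = 2` and `m_x = m₀` for every `x ∈ B`. -/
theorem extended_perrin_rigidity_boundary [Fintype V]
    (G : SimpleGraph V) (hG : G.Connected)
    (B : Finset V) (hB : 2 ≤ B.card)
    (m : V → ℝ) (w : V → V → ℝ)
    (hm : ∀ x, 0 < m x)
    (hw_symm : ∀ x y, w x y = w y x)
    (hw_pos : ∀ x y, G.Adj x y → 0 < w x y)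
    (hw_zero : ∀ x y, ¬ G.Adj x y → w x y = 0)
    (heq : sigma2 B m w =
      minEdgeWeight G w * (∑ x ∈ B, m x) /
        (((∑ x ∈ B, m x) - minBoundaryMeasure B m) ^ 2 * (boundaryDiam G B : ℝ))) :
    B.card = 2 ∧ ∀ x ∈ B, m x = minBoundaryMeasure B m := by
  classical
  set VB := ∑ x ∈ B, m x with hVBdef
  set m₀ := minBoundaryMeasure B m with hm₀def
  set w₀ := minEdgeWeight G w with hw₀def
  set dB := boundaryDiam G B with hdBdef
  -- two distinct boundary points
  obtain ⟨x₀, hx₀, y₀, hy₀, hxy⟩ := Finset.one_lt_card.mp (by omega : 1 < B.card)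
  have hBne : B.Nonempty := ⟨x₀, hx₀⟩
  -- facts about m₀
  have hSm : {r : ℝ | ∃ x ∈ B, m x = r} = m '' ↑B := by
    ext r; simp [Set.mem_image]
  have hSmfin : ({r : ℝ | ∃ x ∈ B, m x = r}).Finite := by
    rw [hSm]; exact (B.finite_toSet).image m
  have hSmne : ({r : ℝ | ∃ x ∈ B, m x = r}).Nonempty := ⟨m x₀, x₀, hx₀, rfl⟩
  have hm₀mem : m₀ ∈ {r : ℝ | ∃ x ∈ B, m x = r} := by
    rw [hm₀def, minBoundaryMeasure]
    exact Set.Nonempty.csInf_mem hSmne hSmfin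
  obtain ⟨z₀, hz₀B, hz₀⟩ := hm₀mem
  have hm₀pos : 0 < m₀ := hz₀ ▸ hm z₀
  have hm₀le : ∀ x ∈ B, m₀ ≤ m x := by
    intro x hx
    exact csInf_le hSmfin.bddBelow ⟨x, hx, rfl⟩
  -- facts about w₀
  have hedge : ∃ a b : V, G.Adj a b := by
    obtain ⟨p⟩ := hG.preconnected x₀ y₀
    cases p with
    | nil => exact absurd rfl hxy
    | cons h q => exact ⟨_, _, h⟩
  obtain ⟨a₀, b₀, hab⟩ := hedge
  have hSwfin : ({r : ℝ | ∃ x y, G.Adj x y ∧ w x y = r}).Finite := by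
    apply Set.Finite.subset (Set.finite_range fun q : V × V => w q.1 q.2)
    rintro r ⟨x, y, _, rfl⟩
    exact ⟨(x, y), rfl⟩
  have hSwne : ({r : ℝ | ∃ x y, G.Adj x y ∧ w x y = r}).Nonempty := ⟨w a₀ b₀, a₀, b₀, hab, rfl⟩
  have hw₀mem : w₀ ∈ {r : ℝ | ∃ x y, G.Adj x y ∧ w x y = r} := by
    rw [hw₀def, minEdgeWeight]
    exact Set.Nonempty.csInf_mem hSwne hSwfin
  obtain ⟨aw, bw, hawbw, hww⟩ := hw₀mem
  have hw₀pos : 0 < w₀ := hww ▸ hw_pos aw bw hawbw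
  have hw₀le : ∀ x y, G.Adj x y → w₀ ≤ w x y := by
    intro x y h
    exact csInf_le hSwfin.bddBelow ⟨x, y, h, rfl⟩
  -- facts about dB
  have hdBle : ∀ x ∈ B, ∀ y ∈ B, G.dist x y ≤ dB := by
    intro x hx y hy
    have hmem : (x, y) ∈ B ×ˢ B := Finset.mem_product.mpr ⟨hx, hy⟩
    exact Finset.le_sup (f := fun p : V × V => G.dist p.1 p.2) hmem
  have hdBpos : 0 < dB :=
    lt_of_lt_of_le (hG.pos_dist_of_ne hxy) (hdBle x₀ hx₀ y₀ hy₀)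
  have hdBR : (0 : ℝ) < (dB : ℝ) := by exact_mod_cast hdBpos
  have hVBpos : 0 < VB := Finset.sum_pos (fun x _ => hm x) hBne
  -- key claim : VB ≤ 2 m₀
  have hkey : VB ≤ 2 * m₀ := by
    by_contra h2
    push_neg at h2
    -- the Rayleigh set
    set S := {r : ℝ | ∃ u : V → ℝ, (∃ x ∈ B, u x ≠ 0) ∧ (∑ x ∈ B, u x * m x = 0) ∧
      r = energy w u / ∑ x ∈ B, (u x) ^ 2 * m x} with hSdef
    -- S is nonempty
    have hSne : S.Nonempty := by
      refine ⟨_, fun z => if z = x₀ then m y₀ else if z = y₀ then -(m x₀) else 0, ⟨x₀, hx₀, ?_⟩, ?_, rfl⟩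
      · simp only [if_pos rfl]
        exact ne_of_gt (hm y₀)
      · have : ∀ x ∈ B, (if x = x₀ then m y₀ else if x = y₀ then -(m x₀) else 0) * m x
            = (if x = x₀ then m y₀ * m x₀ else 0) + (if x = y₀ then -(m x₀) * m y₀ else 0) := by
          intro x _
          by_cases h1 : x = x₀
          · subst h1; simp [if_neg hxy]
          · by_cases h2 : x = y₀
            · subst h2; simp [h1]
            · simp [h1, h2]
        rw [Finset.sum_congr rfl this, Finset.sum_add_distrib,
          Finset.sum_ite_eq' B x₀, Finset.sum_ite_eq' B y₀, if_pos hx₀, if_pos hy₀]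
        ring
    -- lower bound for all elements of S
    have hlow : ∀ r ∈ S, 4 * w₀ / (VB * dB) ≤ r := by
      rintro r ⟨u, ⟨xn, hxn, hxnne⟩, hmean, rfl⟩
      obtain ⟨xM, hxM, hmax⟩ := B.exists_max_image u hBne
      obtain ⟨xμ, hxμ, hmin⟩ := B.exists_min_image u hBne
      have hMpos : 0 < u xM := by
        by_contra h
        push_neg at h
        have hz : ∀ x ∈ B, u x * m x ≤ 0 := fun x hx =>
          mul_nonpos_of_nonpos_of_nonneg (le_trans (hmax x hx) h) (hm x).le
        have := (Finset.sum_eq_zero_iff_of_nonpos hz).mp hmean xn hxn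
        exact hxnne (by
          rcases mul_eq_zero.mp this with h' | h'
          · exact h'
          · exact absurd h' (ne_of_gt (hm xn)))
      have hμneg : u xμ < 0 := by
        by_contra h
        push_neg at h
        have hz : ∀ x ∈ B, 0 ≤ u x * m x := fun x hx =>
          mul_nonneg (le_trans h (hmin x hx)) (hm x).le
        have := (Finset.sum_eq_zero_iff_of_nonneg hz).mp hmean xn hxn
        exact hxnne (by
          rcases mul_eq_zero.mp this with h' | h'
          · exact h'
          · exact absurd h' (ne_of_gt (hm xn)))
      have hMμ : xμ ≠ xM := fun h => by rw [h] at hμneg; linarith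
      set osc := u xM - u xμ with hoscdef
      have hosc : 0 < osc := by simp only [hoscdef]; linarith
      -- denominator bound
      set Den := ∑ x ∈ B, (u x) ^ 2 * m x with hDen
      have hDpos : 0 < Den := by
        apply Finset.sum_pos'
        · intro x _; exact mul_nonneg (sq_nonneg _) (hm x).le
        · exact ⟨xn, hxn, mul_pos (sq_pos_of_ne_zero hxnne) (hm xn)⟩
      have hDle : Den ≤ osc ^ 2 / 4 * VB := by
        have hstep : ∀ x ∈ B, (u x) ^ 2 * m x ≤
            (u xM + u xμ) * (u x * m x) - (u xM * u xμ) * m x := by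
          intro x hx
          have h1 : 0 ≤ (u x - u xμ) * (u xM - u x) * m x :=
            mul_nonneg (mul_nonneg (by linarith [hmin x hx]) (by linarith [hmax x hx])) (hm x).le
          nlinarith [h1]
        have hsum : Den ≤ (u xM + u xμ) * (∑ x ∈ B, u x * m x) - (u xM * u xμ) * VB := by
          rw [hDen, hVBdef, Finset.mul_sum, Finset.mul_sum, ← Finset.sum_sub_distrib]
          exact Finset.sum_le_sum hstep
        rw [hmean] at hsum
        have h4 : -(u xM * u xμ) ≤ osc ^ 2 / 4 := by
          simp only [hoscdef]; nlinarith [sq_nonneg (u xM + u xμ)]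
        nlinarith [hVBpos]
      -- energy bound via a path
      obtain ⟨p₀, hp₀len⟩ := (hG.preconnected xμ xM).exists_walk_length_eq_dist
      set p := p₀.bypass with hpdef
      have hp : p.IsPath := p₀.bypass_isPath
      have hplen : p.length ≤ dB := by
        calc p.length ≤ p₀.length := SimpleGraph.Walk.length_bypass_le p₀
        _ = G.dist xμ xM := hp₀len
        _ ≤ dB := hdBle xμ hxμ xM hxM
      have hplenpos : 0 < p.length := by
        rcases Nat.eq_zero_or_pos p.length with h | h
        · exact absurd (SimpleGraph.Walk.eq_of_length_eq_zero h) hMμ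
        · exact h
      have hdartsnd : p.darts.Nodup := hp.isTrail.edges_nodup.of_map _
      set DD := p.darts.toFinset with hDD
      have hcard : (DD.card : ℝ) = (p.length : ℝ) := by
        rw [hDD, List.toFinset_card_of_nodup hdartsnd, SimpleGraph.Walk.length_darts]
      have htel : ∑ d ∈ DD, (u d.snd - u d.fst) = osc := by
        rw [hDD, List.sum_toFinset _ hdartsnd, walk_telescope u p]
      have hCS : osc ^ 2 ≤ (p.length : ℝ) * ∑ d ∈ DD, (u d.snd - u d.fst) ^ 2 := by
        rw [← htel, ← hcard]
        exact sq_sum_le_card_mul_sum_sq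
      have hsumsq : osc ^ 2 / (dB : ℝ) ≤ ∑ d ∈ DD, (u d.snd - u d.fst) ^ 2 := by
        rw [div_le_iff₀ hdBR]
        calc osc ^ 2 ≤ (p.length : ℝ) * ∑ d ∈ DD, (u d.snd - u d.fst) ^ 2 := hCS
        _ ≤ (dB : ℝ) * ∑ d ∈ DD, (u d.snd - u d.fst) ^ 2 := by
            apply mul_le_mul_of_nonneg_right
            · exact_mod_cast hplen
            · exact Finset.sum_nonneg fun d _ => sq_nonneg _
        _ = (∑ d ∈ DD, (u d.snd - u d.fst) ^ 2) * (dB : ℝ) := mul_comm _ _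
      have hwnn : ∀ x y, 0 ≤ w x y := by
        intro x y
        by_cases h : G.Adj x y
        · exact (hw_pos x y h).le
        · exact (hw_zero x y h).ge
      have hE1 : ∑ d ∈ DD, (u d.snd - u d.fst) ^ 2 * w d.fst d.snd ≤ energy w u :=
        energy_ge_sum_darts w hw_symm hwnn p hp u
      have hE2 : w₀ * (osc ^ 2 / (dB : ℝ)) ≤ ∑ d ∈ DD, (u d.snd - u d.fst) ^ 2 * w d.fst d.snd := by
        calc w₀ * (osc ^ 2 / (dB : ℝ)) ≤ w₀ * ∑ d ∈ DD, (u d.snd - u d.fst) ^ 2 :=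
              mul_le_mul_of_nonneg_left hsumsq hw₀pos.le
        _ = ∑ d ∈ DD, w₀ * (u d.snd - u d.fst) ^ 2 := Finset.mul_sum _ _ _
        _ ≤ ∑ d ∈ DD, (u d.snd - u d.fst) ^ 2 * w d.fst d.snd := by
            apply Finset.sum_le_sum
            intro d hd
            rw [mul_comm]
            exact mul_le_mul_of_nonneg_left (hw₀le _ _ d.adj) (sq_nonneg _)
      have hEnergy : w₀ * (osc ^ 2 / (dB : ℝ)) ≤ energy w u := le_trans hE2 hE1
      have hEnn : 0 ≤ energy w u := le_trans (by positivity) hEnergy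
      have hfinal : w₀ * (osc ^ 2 / (dB : ℝ)) / (osc ^ 2 / 4 * VB) ≤ energy w u / Den :=
        div_le_div₀ hEnn hEnergy hDpos hDle
      have hsimp : w₀ * (osc ^ 2 / (dB : ℝ)) / (osc ^ 2 / 4 * VB) = 4 * w₀ / (VB * dB) := by
        field_simp
      rw [hsimp] at hfinal
      exact hfinal
    have hlowInf : 4 * w₀ / (VB * dB) ≤ sInf S := le_csInf hSne hlow
    have hC : sInf S = w₀ * VB / ((VB - m₀) ^ 2 * (dB : ℝ)) := heq
    have hVBm₀ : 0 < VB - m₀ := by linarith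
    have hstrict : w₀ * VB / ((VB - m₀) ^ 2 * (dB : ℝ)) < 4 * w₀ / (VB * dB) := by
      rw [div_lt_div_iff₀ (by positivity) (by positivity)]
      have key : VB * VB < 4 * (VB - m₀) ^ 2 := by
        nlinarith [mul_pos (show (0:ℝ) < 2 * (VB - m₀) - VB by linarith)
          (show (0:ℝ) < 2 * (VB - m₀) + VB by linarith)]
      calc w₀ * VB * (VB * dB) = (w₀ * dB) * (VB * VB) := by ring
      _ < (w₀ * dB) * (4 * (VB - m₀) ^ 2) :=
          mul_lt_mul_of_pos_left key (mul_pos hw₀pos hdBR)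
      _ = 4 * w₀ * ((VB - m₀) ^ 2 * dB) := by ring
    rw [hC] at hlowInf
    linarith
  -- conclude
  have hsum0 : ∑ x ∈ B, (m x - m₀) = VB - B.card * m₀ := by
    rw [Finset.sum_sub_distrib, Finset.sum_const, nsmul_eq_mul]
  have hle0 : ∑ x ∈ B, (m x - m₀) ≤ 0 := by
    have hcard : (2 : ℝ) ≤ (B.card : ℝ) := by exact_mod_cast hB
    rw [hsum0]
    nlinarith [hm₀pos]
  have hall : ∀ x ∈ B, m x - m₀ = 0 := by
    intro x hx
    have := (Finset.sum_eq_zero_iff_of_nonneg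
      (fun x hx => sub_nonneg.mpr (hm₀le x hx))).mp
      (le_antisymm hle0 (Finset.sum_nonneg fun x hx => sub_nonneg.mpr (hm₀le x hx)))
    exact this x hx
  have hmall : ∀ x ∈ B, m x = m₀ := fun x hx => by linarith [hall x hx]
  constructor
  · have : VB = B.card * m₀ := by
      rw [hVBdef, Finset.sum_congr rfl hmall, Finset.sum_const, nsmul_eq_mul]
    have hcard2 : (B.card : ℝ) * m₀ ≤ 2 * m₀ := by rw [← this]; exact hkey
    have : (B.card : ℝ) ≤ 2 := by
      by_contra h
      push_neg at h
      nlinarith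
    have h2 : B.card ≤ 2 := by exact_mod_cast this
    omega
  · exact hmall
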